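/- arXiv:2502.04270 — 4 statements merged into one kernel-verified Lean document; each statement's English description precedes it below -/
import Mathlib

section
/- For all real z and z*, the identity σ(z*) - σ(z) = σ'(z)(z* - z) + R holds with a remainder R satisfying |R| ≤ 0.1·(1 + e^{2R₀})·(z* - z)² whenever |z|, |z*| ≤ 2R₀. In particular, if |z|,|z*| ≤ 2R₀ then |(σ(z*) - σ(z))/σ'(z) - (z* - z)| ≤ 0.1·(1 + e^{2R₀})·(z* - z)². -/
noncomputable def sigmoid (z : ℝ) : ℝ := (1 + Real.exp (-z))⁻¹

noncomputable def sigmoid' (z : ℝ) : ℝ := sigmoid z * sigmoid (-z)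

lemma one_add_exp_pos (z : ℝ) : 0 < 1 + Real.exp (-z) := by positivity

lemma exp_mul_exp_neg (z : ℝ) : Real.exp (-z) * Real.exp z = 1 := by
  rw [← Real.exp_add]; simp

lemma sigmoid_pos (z : ℝ) : 0 < sigmoid z := by
  unfold sigmoid; positivity

lemma sigmoid_neg_eq (z : ℝ) : sigmoid (-z) = 1 - sigmoid z := by
  unfold sigmoid
  rw [neg_neg]
  have h1 := (one_add_exp_pos z).ne'
  have h2 := (one_add_exp_pos (-z)).ne'
  rw [neg_neg] at h2
  have key := exp_mul_exp_neg z
  field_simp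
  linear_combination -key

lemma hasDerivAt_sigmoid (z : ℝ) : HasDerivAt sigmoid (sigmoid' z) z := by
  have h : HasDerivAt (fun x : ℝ => 1 + Real.exp (-x)) (-Real.exp (-z)) z := by
    simpa using (((hasDerivAt_id z).neg).exp.const_add 1)
  have h2 := h.inv (one_add_exp_pos z).ne'
  refine h2.congr_deriv ?_
  unfold sigmoid' sigmoid
  rw [neg_neg]
  have h1 := (one_add_exp_pos z).ne'
  have h2' := (one_add_exp_pos (-z)).ne'
  rw [neg_neg] at h2'
  have key := exp_mul_exp_neg z
  field_simp
  linear_combination key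

noncomputable def sigmoid'' (z : ℝ) : ℝ := sigmoid' z * (sigmoid (-z) - sigmoid z)

lemma hasDerivAt_sigmoid' (z : ℝ) : HasDerivAt sigmoid' (sigmoid'' z) z := by
  have h1 := hasDerivAt_sigmoid z
  have h2 : HasDerivAt (fun x : ℝ => sigmoid (-x)) (-sigmoid' (-z)) z := by
    exact ((hasDerivAt_sigmoid (-z)).comp z ((hasDerivAt_id z).neg)).congr_deriv (by simp)
  have h3 := h1.mul h2
  refine h3.congr_deriv ?_
  unfold sigmoid'' sigmoid'
  rw [neg_neg]
  ring

lemma sigmoid_lt_one (z : ℝ) : sigmoid z < 1 := by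
  have := sigmoid_pos (-z); rw [sigmoid_neg_eq] at this; linarith

lemma abs_sigmoid''_le (z : ℝ) : |sigmoid'' z| ≤ 0.1 := by
  have hs := sigmoid_pos z
  have hs1 := sigmoid_lt_one z
  set s := sigmoid z with hsdef
  have h : sigmoid'' z = s * (1 - s) * (1 - 2 * s) := by
    unfold sigmoid'' sigmoid'
    rw [sigmoid_neg_eq]; ring
  rw [h, abs_le]
  constructor <;> nlinarith [sq_nonneg (s - 1/2), sq_nonneg s, sq_nonneg (1-s),
    sq_nonneg (s*(1-s)), sq_nonneg (s - 1/5), sq_nonneg (s - 4/5),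
    mul_pos hs (sub_pos.mpr hs1)]

lemma sigmoid'_lipschitz (a b : ℝ) : |sigmoid' b - sigmoid' a| ≤ 0.1 * |b - a| := by
  have := Convex.norm_image_sub_le_of_norm_hasDerivWithin_le
    (f := sigmoid') (f' := fun x => sigmoid'' x) (C := 0.1) (s := Set.univ)
    (fun x _ => (hasDerivAt_sigmoid' x).hasDerivWithinAt)
    (fun x _ => by simpa using abs_sigmoid''_le x) convex_univ (Set.mem_univ a) (Set.mem_univ b)
  simpa [Real.norm_eq_abs] using this

lemma continuous_sigmoid' : Continuous sigmoid' := by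
  have h : Differentiable ℝ sigmoid' := fun x => (hasDerivAt_sigmoid' x).differentiableAt
  exact h.continuous

lemma integral_sub_base (z zs : ℝ) : (∫ t in z..zs, (t - z)) = (zs - z)^2 / 2 := by
  have h := intervalIntegral.integral_comp_sub_right (a := z) (b := zs) (fun u => u) z
  simp only [integral_id] at h
  rw [h]
  ring_nf

lemma taylor_remainder_bound (z zs : ℝ) :
    |sigmoid zs - sigmoid z - sigmoid' z * (zs - z)| ≤ 0.05 * (zs - z)^2 := by
  have hci : ∀ a b : ℝ, IntervalIntegrable sigmoid' MeasureTheory.volume a b :=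
    fun a b => continuous_sigmoid'.intervalIntegrable a b
  have hftc : sigmoid zs - sigmoid z = ∫ t in z..zs, sigmoid' t :=
    (intervalIntegral.integral_eq_sub_of_hasDerivAt (fun t _ => hasDerivAt_sigmoid t)
      (hci z zs)).symm
  have hconst : sigmoid' z * (zs - z) = ∫ t in z..zs, sigmoid' z := by
    rw [intervalIntegral.integral_const]; simp [smul_eq_mul]; ring
  have hsub : sigmoid zs - sigmoid z - sigmoid' z * (zs - z)
      = ∫ t in z..zs, (sigmoid' t - sigmoid' z) := by
    rw [hftc, hconst, intervalIntegral.integral_sub (hci z zs)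
      (intervalIntegrable_const)]
  rw [hsub]
  have hg : IntervalIntegrable (fun t => 0.1 * |t - z|) MeasureTheory.volume z zs :=
    (Continuous.mul continuous_const (continuous_abs.comp (by continuity))).intervalIntegrable z zs
  have hb : ‖∫ t in z..zs, (sigmoid' t - sigmoid' z)‖ ≤ abs (∫ t in z..zs, 0.1 * |t - z|) := by
    refine intervalIntegral.norm_integral_le_abs_of_norm_le (MeasureTheory.ae_of_all _ fun t => ?_) hg
    simpa [Real.norm_eq_abs] using sigmoid'_lipschitz z t
  rw [Real.norm_eq_abs] at hb
  refine hb.trans ?_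
  rcases le_total z zs with h | h
  · have : (∫ t in z..zs, 0.1 * |t - z|) = ∫ t in z..zs, 0.1 * (t - z) := by
      apply intervalIntegral.integral_congr
      intro t ht
      rw [Set.uIcc_of_le h] at ht
      dsimp only
      rw [abs_of_nonneg (by linarith [ht.1, ht.2])]
    rw [this, intervalIntegral.integral_const_mul, integral_sub_base]
    rw [abs_of_nonneg (by positivity)]
    ring_nf
    nlinarith [sq_nonneg (zs - z)]
  · have : (∫ t in z..zs, 0.1 * |t - z|) = ∫ t in z..zs, 0.1 * (z - t) := by
      apply intervalIntegral.integral_congr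
      intro t ht
      rw [Set.uIcc_of_ge h] at ht
      dsimp only
      rw [abs_of_nonpos (by linarith [ht.1, ht.2])]
      ring
    rw [this]
    have : (∫ t in z..zs, 0.1 * (z - t)) = -0.05 * (zs - z)^2 := by
      have h2 : ∀ t : ℝ, 0.1 * (z - t) = -(0.1 * (t - z)) := fun t => by ring
      simp_rw [h2, intervalIntegral.integral_neg, intervalIntegral.integral_const_mul,
        integral_sub_base]
      ring
    rw [this, abs_of_nonpos (by nlinarith [sq_nonneg (zs - z)])]
    nlinarith [sq_nonneg (zs - z)]

lemma sigmoid'_pos (z : ℝ) : 0 < sigmoid' z :=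
  mul_pos (sigmoid_pos z) (sigmoid_pos (-z))

lemma inv_sigmoid' (z : ℝ) : (sigmoid' z)⁻¹ = 2 + Real.exp z + Real.exp (-z) := by
  unfold sigmoid' sigmoid
  rw [neg_neg, mul_inv, inv_inv, inv_inv]
  have key := exp_mul_exp_neg z
  linear_combination key

theorem sigmoid_taylor_bound (R₀ : ℝ) (hR₀ : 0 < R₀) (z zs : ℝ)
    (hz : |z| ≤ 2 * R₀) (hzs : |zs| ≤ 2 * R₀) :
    (∃ R : ℝ, sigmoid zs - sigmoid z = sigmoid' z * (zs - z) + R ∧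
      |R| ≤ 0.1 * (1 + Real.exp (2 * R₀)) * (zs - z) ^ 2) ∧
    |(sigmoid zs - sigmoid z) / sigmoid' z - (zs - z)| ≤
      0.1 * (1 + Real.exp (2 * R₀)) * (zs - z) ^ 2 := by
  have hE : (1 : ℝ) ≤ Real.exp (2 * R₀) := Real.one_le_exp (by positivity)
  have hR := taylor_remainder_bound z zs
  have hsq : (0:ℝ) ≤ (zs - z)^2 := sq_nonneg _
  constructor
  · refine ⟨sigmoid zs - sigmoid z - sigmoid' z * (zs - z), by ring, ?_⟩
    refine hR.trans ?_
    nlinarith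
  · have hsp := sigmoid'_pos z
    have heq : (sigmoid zs - sigmoid z) / sigmoid' z - (zs - z)
        = (sigmoid zs - sigmoid z - sigmoid' z * (zs - z)) * (sigmoid' z)⁻¹ := by
      field_simp
    rw [heq, abs_mul, abs_of_nonneg (le_of_lt (inv_pos.mpr hsp)), inv_sigmoid']
    have h1 : Real.exp z ≤ Real.exp (2 * R₀) := Real.exp_le_exp.mpr (le_of_abs_le hz)
    have h2 : Real.exp (-z) ≤ Real.exp (2 * R₀) := by
      apply Real.exp_le_exp.mpr
      have := neg_abs_le z
      linarith [abs_nonneg z, le_of_abs_le hz, neg_le_of_abs_le hz]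
    have hinv : 2 + Real.exp z + Real.exp (-z) ≤ 2 * (1 + Real.exp (2 * R₀)) := by linarith
    have habs : |sigmoid zs - sigmoid z - sigmoid' z * (zs - z)| ≥ 0 := abs_nonneg _
    calc |sigmoid zs - sigmoid z - sigmoid' z * (zs - z)| * (2 + Real.exp z + Real.exp (-z))
        ≤ (0.05 * (zs - z)^2) * (2 * (1 + Real.exp (2 * R₀))) := by
          apply mul_le_mul hR hinv (by positivity) (by positivity)
      _ = 0.1 * (1 + Real.exp (2 * R₀)) * (zs - z) ^ 2 := by ring
end

section
/- Let π_θ be a differentiable family of positive densities on a finite set Y, r* : Y → ℝ a fixed function, π_ref a fixed positive density, β > 0, and r_θ(y) = β·log(π_θ(y)/π_ref(y)). Define J(θ) = Σ_y π_θ(y)·r*(y) - β·Σ_y π_θ(y)·log(π_θ(y)/π_ref(y)). Then ∇_θ J(θ) = (1/β)·Σ_y π_θ(y)·(r*(y) - r_θ(y))·(∇_θ r_θ(y) - E_{y'∼π_θ}[∇_θ r_θ(y')]). -/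
open scoped BigOperators

/-- Gradient of the KL-regularized oracle objective
`J(θ) = Σ_y π_θ(y)·r*(y) - β·Σ_y π_θ(y)·log(π_θ(y)/π_ref(y))`:
`∇_θ J(θ) = (1/β)·Σ_y π_θ(y)·(r*(y) - r_θ(y))·(∇_θ r_θ(y) - E_{y'∼π_θ}[∇_θ r_θ(y')])`. -/
theorem objective_gradient (d : ℕ) {Y : Type*} [Fintype Y]
    (π : (Fin d → ℝ) → Y → ℝ) (πref : Y → ℝ) (rstar : Y → ℝ) (β : ℝ) (hβ : 0 < β)
    (hpos : ∀ θ y, 0 < π θ y) (hrefpos : ∀ y, 0 < πref y)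
    (hsum : ∀ θ, ∑ y, π θ y = 1)
    (hdiff : ∀ y, Differentiable ℝ (fun θ => π θ y))
    (θ : Fin d → ℝ) :
    fderiv ℝ (fun θ' => (∑ y : Y, π θ' y * rstar y) -
        β * ∑ y : Y, π θ' y * Real.log (π θ' y / πref y)) θ =
      (1 / β) •
        ∑ y : Y, (π θ y * (rstar y - β * Real.log (π θ y / πref y))) •
          (fderiv ℝ (fun θ' => β * Real.log (π θ' y / πref y)) θ -
            ∑ y' : Y, π θ y' •
              fderiv ℝ (fun θ'' => β * Real.log (π θ'' y' / πref y')) θ) := by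
  classical
  set D : Y → (Fin d → ℝ) →L[ℝ] ℝ := fun y => fderiv ℝ (fun θ' => π θ' y) θ with hDdef
  have hne : ∀ (θ' : Fin d → ℝ) (y : Y), π θ' y ≠ 0 := fun θ' y => (hpos θ' y).ne'
  have hrefne : ∀ y : Y, πref y ≠ 0 := fun y => (hrefpos y).ne'
  -- derivative of log term
  have hlog : ∀ y : Y, HasFDerivAt (fun θ' => Real.log (π θ' y / πref y))
      ((π θ y)⁻¹ • D y) θ := by
    intro y
    have h1 : (fun θ' => Real.log (π θ' y / πref y))
        = fun θ' => Real.log (π θ' y) - Real.log (πref y) := by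
      funext θ'; exact Real.log_div (hne θ' y) (hrefne y)
    rw [h1]
    exact (((hdiff y θ).hasFDerivAt).log (hne θ y)).sub_const _
  have hβlog : ∀ y : Y, fderiv ℝ (fun θ' => β * Real.log (π θ' y / πref y)) θ
      = (β * (π θ y)⁻¹) • D y := by
    intro y
    rw [((hlog y).const_mul β).fderiv, smul_smul]
  -- sum of D is zero
  have hDsum : ∑ y : Y, D y = 0 := by
    have h1 : HasFDerivAt (fun θ' => ∑ y : Y, π θ' y) (∑ y : Y, D y) θ :=
      HasFDerivAt.fun_sum fun y _ => (hdiff y θ).hasFDerivAt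
    have h0 : fderiv ℝ (fun θ' : Fin d → ℝ => ∑ y : Y, π θ' y) θ = 0 := by
      have he : (fun θ' : Fin d → ℝ => ∑ y : Y, π θ' y) = fun _ => (1:ℝ) := funext hsum
      rw [he]; exact fderiv_const_apply 1
    rw [← h1.fderiv, h0]
  -- LHS derivative
  have hJ : HasFDerivAt (fun θ' => (∑ y : Y, π θ' y * rstar y) -
      β * ∑ y : Y, π θ' y * Real.log (π θ' y / πref y))
      ((∑ y : Y, rstar y • D y) -
        β • ∑ y : Y, (π θ y • ((π θ y)⁻¹ • D y) + Real.log (π θ y / πref y) • D y)) θ := by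
    have h1 : HasFDerivAt (fun θ' => ∑ y : Y, π θ' y * rstar y)
        (∑ y : Y, rstar y • D y) θ :=
      HasFDerivAt.fun_sum fun y _ => (hdiff y θ).hasFDerivAt.mul_const (rstar y)
    have h2 : HasFDerivAt (fun θ' => β * ∑ y : Y, π θ' y * Real.log (π θ' y / πref y))
        (β • ∑ y : Y, (π θ y • ((π θ y)⁻¹ • D y) + Real.log (π θ y / πref y) • D y)) θ := by
      refine HasFDerivAt.const_mul ?_ β
      exact HasFDerivAt.fun_sum fun y _ => (hdiff y θ).hasFDerivAt.mul (hlog y)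
    exact h1.sub h2
  rw [hJ.fderiv]
  simp only [hβlog]
  -- inner expectation is zero
  have hinner : ∑ y' : Y, π θ y' • ((β * (π θ y')⁻¹) • D y') = 0 := by
    have he : ∀ y' : Y, π θ y' • ((β * (π θ y')⁻¹) • D y') = β • D y' := by
      intro y'; rw [smul_smul]; congr 1
      rw [mul_comm β, ← mul_assoc, mul_inv_cancel₀ (hne θ y'), one_mul]
    simp_rw [he, ← Finset.smul_sum, hDsum, smul_zero]
  rw [hinner]
  simp only [sub_zero]
  -- simplify per-term
  have hterm : ∀ y : Y, π θ y • ((π θ y)⁻¹ • D y) + Real.log (π θ y / πref y) • D y = D y + Real.log (π θ y / πref y) • D y := by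
    intro y
    rw [smul_smul, mul_inv_cancel₀ (hne θ y), one_smul]
  simp_rw [hterm]
  have hR : ∀ y : Y, (1 / β) • ((π θ y * (rstar y - β * Real.log (π θ y / πref y))) • ((β * (π θ y)⁻¹) • D y))
      = (rstar y - β * Real.log (π θ y / πref y)) • D y := by
    intro y
    rw [smul_smul, smul_smul]; congr 1
    field_simp [hne θ y]
  simp only [Finset.smul_sum]
  simp_rw [hR, smul_add, smul_smul]
  rw [Finset.sum_add_distrib, ← Finset.smul_sum, hDsum, smul_zero, zero_add,
    ← Finset.sum_sub_distrib]
  refine Finset.sum_congr rfl fun y _ => ?_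
  exact (sub_smul _ _ _).symm
end

section
/- With J and r_θ as in the KL-regularized objective on a finite set Y, the gradient of J can be written in symmetric pairwise form: ∇_θ J(θ) = (1/(2β))·Σ_{y^a, y^b} π_θ(y^a)π_θ(y^b)·[(r*(y^a) - r*(y^b)) - (r_θ(y^a) - r_θ(y^b))]·[∇_θ r_θ(y^a) - ∇_θ r_θ(y^b)]. -/
open scoped BigOperators

lemma pairwise_sum_aux {M : Type*} [AddCommGroup M] [Module ℝ M] {Y : Type*} [Fintype Y]
    (p A : Y → ℝ) (g : Y → M) (β : ℝ) (hβ : β ≠ 0) (hp : ∀ y, p y ≠ 0)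
    (hp1 : ∑ y, p y = 1) (hg0 : ∑ y, g y = 0) :
    (1 / (2 * β)) • ∑ a : Y, ∑ b : Y,
        (p a * p b * (A a - A b)) • ((β / p a) • g a - (β / p b) • g b)
      = ∑ y, A y • g y := by
  set S : M := ∑ y, A y • g y with hS
  set S1 : ℝ := ∑ y, A y * p y with hS1
  have key : ∀ a b : Y, (p a * p b * (A a - A b)) • ((β / p a) • g a - (β / p b) • g b)
      = (β * A a * p b) • g a - (β * A b * p b) • g a
        - ((β * A a * p a) • g b - (β * A b * p a) • g b) := by
    intro a b
    rw [smul_sub, smul_smul, smul_smul]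
    have h1 : p a * p b * (A a - A b) * (β / p a) = β * A a * p b - β * A b * p b := by
      field_simp [hp a]
    have h2 : p a * p b * (A a - A b) * (β / p b) = β * A a * p a - β * A b * p a := by
      field_simp [hp b]
    rw [h1, h2, sub_smul, sub_smul]
  have inner : ∀ a : Y, ∑ b : Y,
      (p a * p b * (A a - A b)) • ((β / p a) • g a - (β / p b) • g b)
      = (β * A a) • g a - (β * S1) • g a + (β * p a) • S := by
    intro a
    rw [Finset.sum_congr rfl fun b _ => key a b]
    simp only [Finset.sum_sub_distrib]
    have e1 : ∑ b : Y, (β * A a * p b) • g a = (β * A a) • g a := by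
      rw [← Finset.sum_smul, ← Finset.mul_sum, hp1, mul_one]
    have e2 : ∑ b : Y, (β * A b * p b) • g a = (β * S1) • g a := by
      rw [← Finset.sum_smul]
      congr 1
      rw [hS1, Finset.mul_sum]
      exact Finset.sum_congr rfl fun b _ => by ring
    have e3 : ∑ b : Y, (β * A a * p a) • g b = 0 := by
      rw [← Finset.smul_sum, hg0, smul_zero]
    have e4 : ∑ b : Y, (β * A b * p a) • g b = (β * p a) • S := by
      rw [hS, Finset.smul_sum]
      refine Finset.sum_congr rfl fun b _ => ?_
      rw [smul_smul]
      congr 1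
      ring
    rw [e1, e2, e3, e4]
    abel
  calc (1 / (2 * β)) • ∑ a : Y, ∑ b : Y,
        (p a * p b * (A a - A b)) • ((β / p a) • g a - (β / p b) • g b)
      = (1 / (2 * β)) • ∑ a : Y, ((β * A a) • g a - (β * S1) • g a + (β * p a) • S) := by
        rw [Finset.sum_congr rfl fun a _ => inner a]
    _ = (1 / (2 * β)) • ((2 * β) • S) := by
        congr 1
        simp only [Finset.sum_add_distrib, Finset.sum_sub_distrib]
        have h1 : ∑ a : Y, (β * A a) • g a = β • S := by
          rw [hS, Finset.smul_sum]
          exact Finset.sum_congr rfl fun a _ => by rw [smul_smul]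
        have h2 : ∑ a : Y, (β * S1) • g a = 0 := by
          rw [← Finset.smul_sum, hg0, smul_zero]
        have h3 : ∑ a : Y, (β * p a) • S = β • S := by
          rw [← Finset.sum_smul, ← Finset.mul_sum, hp1, mul_one]
        rw [h1, h2, h3, sub_zero, ← add_smul]
        ring_nf
    _ = S := by
        rw [smul_smul, one_div, inv_mul_cancel₀ (mul_ne_zero two_ne_zero hβ), one_smul]

/-- Symmetric pairwise form of the gradient of the KL-regularized objective:
`∇_θ J(θ) = (1/(2β))·Σ_{yᵃ,yᵇ} π_θ(yᵃ)π_θ(yᵇ)·[(r*(yᵃ)-r*(yᵇ)) - (r_θ(yᵃ)-r_θ(yᵇ))]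
· [∇_θ r_θ(yᵃ) - ∇_θ r_θ(yᵇ)]`. -/
theorem objective_gradient_pairwise (d : ℕ) {Y : Type*} [Fintype Y]
    (π : (Fin d → ℝ) → Y → ℝ) (πref : Y → ℝ) (rstar : Y → ℝ) (β : ℝ) (hβ : 0 < β)
    (hpos : ∀ θ y, 0 < π θ y) (hrefpos : ∀ y, 0 < πref y)
    (hsum : ∀ θ, ∑ y, π θ y = 1)
    (hdiff : ∀ y, Differentiable ℝ (fun θ => π θ y))
    (θ : Fin d → ℝ) :
    fderiv ℝ (fun θ' => (∑ y : Y, π θ' y * rstar y) -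
        β * ∑ y : Y, π θ' y * Real.log (π θ' y / πref y)) θ =
      (1 / (2 * β)) •
        ∑ ya : Y, ∑ yb : Y,
          (π θ ya * π θ yb *
            ((rstar ya - rstar yb) -
              (β * Real.log (π θ ya / πref ya) - β * Real.log (π θ yb / πref yb)))) •
          (fderiv ℝ (fun θ' => β * Real.log (π θ' ya / πref ya)) θ -
            fderiv ℝ (fun θ' => β * Real.log (π θ' yb / πref yb)) θ) := by
  classical
  set g : Y → ((Fin d → ℝ) →L[ℝ] ℝ) := fun y => fderiv ℝ (fun θ' => π θ' y) θ with hg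
  have hd : ∀ y, HasFDerivAt (fun θ' => π θ' y) (g y) θ := fun y =>
    ((hdiff y) θ).hasFDerivAt
  have hgsum : ∑ y : Y, g y = 0 := by
    have h0 : HasFDerivAt (fun θ' : Fin d → ℝ => ∑ y : Y, π θ' y)
        (∑ y : Y, g y) θ := HasFDerivAt.fun_sum (fun y _ => hd y)
    have h1 : (fun θ' : Fin d → ℝ => ∑ y : Y, π θ' y) = fun _ => (1 : ℝ) := by
      funext θ'; exact hsum θ'
    rw [h1] at h0
    have h2 : HasFDerivAt (fun _ : Fin d → ℝ => (1 : ℝ)) (0 : (Fin d → ℝ) →L[ℝ] ℝ) θ :=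
      hasFDerivAt_const 1 θ
    exact h0.unique h2
  -- derivative of the log-ratio
  have hlog : ∀ y, HasFDerivAt (fun θ' => Real.log (π θ' y / πref y))
      ((π θ y)⁻¹ • g y) θ := by
    intro y
    have hfun : (fun θ' => Real.log (π θ' y / πref y))
        = fun θ' => Real.log (π θ' y) - Real.log (πref y) := by
      funext θ'
      exact Real.log_div (hpos θ' y).ne' (hrefpos y).ne'
    rw [hfun]
    exact ((hd y).log (hpos θ y).ne').sub_const _
  have hr : ∀ y, HasFDerivAt (fun θ' => β * Real.log (π θ' y / πref y))
      ((β / π θ y) • g y) θ := by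
    intro y
    have := (hlog y).const_mul β
    rwa [smul_smul, ← div_eq_mul_inv] at this
  have hrfd : ∀ y, fderiv ℝ (fun θ' => β * Real.log (π θ' y / πref y)) θ
      = (β / π θ y) • g y := fun y => (hr y).fderiv
  -- derivative of the objective
  have hJ : HasFDerivAt (fun θ' => (∑ y : Y, π θ' y * rstar y) -
      β * ∑ y : Y, π θ' y * Real.log (π θ' y / πref y))
      ((∑ y : Y, rstar y • g y) -
        β • ∑ y : Y, (π θ y • ((π θ y)⁻¹ • g y) + Real.log (π θ y / πref y) • g y)) θ := by
    refine HasFDerivAt.sub ?_ ?_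
    · exact HasFDerivAt.fun_sum (fun y _ => (hd y).mul_const (rstar y))
    · exact (HasFDerivAt.fun_sum (fun y _ => (hd y).mul (hlog y))).const_mul β
  rw [hJ.fderiv]
  -- simplify the LHS derivative
  have hsimp : (∑ y : Y, rstar y • g y) -
      β • ∑ y : Y, (π θ y • ((π θ y)⁻¹ • g y) + Real.log (π θ y / πref y) • g y)
      = ∑ y : Y, (rstar y - β * Real.log (π θ y / πref y)) • g y := by
    have h1 : ∀ y : Y, π θ y • ((π θ y)⁻¹ • g y) = g y := fun y => by
      rw [smul_smul, mul_inv_cancel₀ (hpos θ y).ne', one_smul]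
    calc (∑ y : Y, rstar y • g y) -
        β • ∑ y : Y, (π θ y • ((π θ y)⁻¹ • g y) + Real.log (π θ y / πref y) • g y)
        = (∑ y : Y, rstar y • g y) -
          β • ((∑ y : Y, g y) + ∑ y : Y, Real.log (π θ y / πref y) • g y) := by
          rw [← Finset.sum_add_distrib]
          congr 2
          exact Finset.sum_congr rfl fun y _ => by rw [h1 y]
      _ = (∑ y : Y, rstar y • g y) - ∑ y : Y, (β * Real.log (π θ y / πref y)) • g y := by
          rw [hgsum, zero_add, Finset.smul_sum]
          congr 1
          exact Finset.sum_congr rfl fun y _ => by rw [smul_smul]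
      _ = ∑ y : Y, (rstar y - β * Real.log (π θ y / πref y)) • g y := by
          rw [← Finset.sum_sub_distrib]
          exact Finset.sum_congr rfl fun y _ => (sub_smul _ _ _).symm
  rw [hsimp]
  -- apply the pairwise lemma
  have := pairwise_sum_aux (p := fun y => π θ y)
      (A := fun y => rstar y - β * Real.log (π θ y / πref y)) (g := g) (β := β)
      hβ.ne' (fun y => (hpos θ y).ne') (hsum θ) hgsum
  rw [← this]
  congr 1
  refine Finset.sum_congr rfl fun a _ => Finset.sum_congr rfl fun b _ => ?_
  rw [hrfd a, hrfd b]
  ring_nf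
end

section
/- At θ* with r_{θ*} = r*, the Hessian of the KL-regularized objective is ∇²_θ J(θ*) = -(1/β)·Cov_{y∼π_{θ*}}[∇_θ r*(y)], where Cov denotes the covariance matrix E[g g^T] - E[g]E[g]^T of the gradient vector g(y) = ∇_θ r_θ(y) evaluated at θ*. In particular ∇²_θ J(θ*) is negative semidefinite. -/
open scoped BigOperators

set_option maxHeartbeats 2000000 in
/-- Hessian of the KL-regularized objective at the optimum: at `θ*` with `r_{θ*} = r*`,
`∇²_θ J(θ*) = -(1/β)·Cov_{y∼π_{θ*}}[∇_θ r*(y)]` (as a bilinear form), and in particular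
the Hessian is negative semidefinite. -/
theorem objective_hessian_at_optimum (d : ℕ) {Y : Type*} [Fintype Y]
    (π : (Fin d → ℝ) → Y → ℝ) (πref : Y → ℝ) (rstar : Y → ℝ) (β : ℝ) (hβ : 0 < β)
    (hpos : ∀ θ y, 0 < π θ y) (hrefpos : ∀ y, 0 < πref y)
    (hsum : ∀ θ, ∑ y, π θ y = 1)
    (hdiff : ∀ y, ContDiff ℝ 2 (fun θ => π θ y))
    (θstar : Fin d → ℝ)
    (hstar : ∀ y : Y, β * Real.log (π θstar y / πref y) = rstar y)
    (J : (Fin d → ℝ) → ℝ)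
    (hJ : J = fun θ' => (∑ y : Y, π θ' y * rstar y) -
        β * ∑ y : Y, π θ' y * Real.log (π θ' y / πref y))
    (Dr : Y → (Fin d → ℝ) →L[ℝ] ℝ)
    (hDr : ∀ y, Dr y = fderiv ℝ (fun θ' => β * Real.log (π θ' y / πref y)) θstar) :
    (∀ u v : Fin d → ℝ,
      fderiv ℝ (fun θ' => (fderiv ℝ J θ') v) θstar u =
        -(1 / β) *
          ((∑ y : Y, π θstar y * (Dr y u * Dr y v)) -
            (∑ y : Y, π θstar y * Dr y u) * (∑ y : Y, π θstar y * Dr y v))) ∧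
    (∀ u : Fin d → ℝ,
      fderiv ℝ (fun θ' => (fderiv ℝ J θ') u) θstar u ≤ 0) := by
  have hπne : ∀ θ y, π θ y ≠ 0 := fun θ y => (hpos θ y).ne'
  have hrefne : ∀ y, πref y ≠ 0 := fun y => (hrefpos y).ne'
  set P : Y → (Fin d → ℝ) → (Fin d → ℝ) →L[ℝ] ℝ :=
    fun y θ => fderiv ℝ (fun θ' => π θ' y) θ with hPdef
  have hdP : ∀ y θ, HasFDerivAt (fun θ' => π θ' y) (P y θ) θ := fun y θ =>
    (((hdiff y).differentiable (by norm_num)) θ).hasFDerivAt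
  -- derivative of the log term
  have hlog : ∀ θ y, HasFDerivAt (fun θ' => Real.log (π θ' y / πref y))
      ((π θ y)⁻¹ • P y θ) θ := by
    intro θ y
    have h1 : (fun θ' => Real.log (π θ' y / πref y)) =
        fun θ' => Real.log (π θ' y) - Real.log (πref y) := by
      funext θ'; rw [Real.log_div (hπne θ' y) (hrefne y)]
    rw [h1]
    have h2 := (Real.hasDerivAt_log (hπne θ y)).comp_hasFDerivAt θ (hdP y θ)
    simpa [Function.comp] using h2.sub_const (Real.log (πref y))
  -- derivative of the coefficient
  have hc' : ∀ y, HasFDerivAt (fun θ' => rstar y - β * (Real.log (π θ' y / πref y) + 1))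
      ((-(β * (π θstar y)⁻¹)) • P y θstar) θstar := by
    intro y
    have h := (((hlog θstar y).add_const 1).const_mul β).const_sub (rstar y)
    rw [show (-(β * (π θstar y)⁻¹)) • P y θstar = -(β • (π θstar y)⁻¹ • P y θstar) by module]
    exact h
  -- first derivative of J
  have hJ1 : ∀ θ, HasFDerivAt J
      (∑ y : Y, (rstar y - β * (Real.log (π θ y / πref y) + 1)) • P y θ) θ := by
    intro θ
    have hA : HasFDerivAt (fun θ' => ∑ y : Y, π θ' y * rstar y)
        (∑ y : Y, (rstar y) • P y θ) θ :=
      HasFDerivAt.fun_sum (fun y _ => (hdP y θ).mul_const (rstar y))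
    have hB : HasFDerivAt (fun θ' => ∑ y : Y, π θ' y * Real.log (π θ' y / πref y))
        (∑ y : Y, (π θ y • ((π θ y)⁻¹ • P y θ) + Real.log (π θ y / πref y) • P y θ)) θ :=
      HasFDerivAt.fun_sum (fun y _ => (hdP y θ).mul (hlog θ y))
    have h := hA.sub (hB.const_mul β)
    have he : (∑ y : Y, (rstar y) • P y θ) -
        β • (∑ y : Y, (π θ y • ((π θ y)⁻¹ • P y θ) + Real.log (π θ y / πref y) • P y θ)) =
        ∑ y : Y, (rstar y - β * (Real.log (π θ y / πref y) + 1)) • P y θ := by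
      rw [Finset.smul_sum, ← Finset.sum_sub_distrib]
      refine Finset.sum_congr rfl (fun y _ => ?_)
      rw [smul_smul, mul_inv_cancel₀ (hπne θ y)]
      module
    rw [hJ]
    exact he ▸ h
  have hgrad : ∀ θ (v : Fin d → ℝ), fderiv ℝ J θ v =
      ∑ y : Y, (rstar y - β * (Real.log (π θ y / πref y) + 1)) * (P y θ v) := by
    intro θ v
    rw [(hJ1 θ).fderiv]
    simp [ContinuousLinearMap.sum_apply]
  -- second derivatives of π
  set Q : Y → (Fin d → ℝ) →L[ℝ] ((Fin d → ℝ) →L[ℝ] ℝ) :=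
    fun y => fderiv ℝ (fderiv ℝ (fun θ' => π θ' y)) θstar with hQdef
  have hQ : ∀ y, HasFDerivAt (fun θ => P y θ) (Q y) θstar := fun y =>
    ((((hdiff y).fderiv_right (m := 1) (by norm_num)).differentiable (by norm_num)) θstar).hasFDerivAt
  have hQv : ∀ (y : Y) (v : Fin d → ℝ), HasFDerivAt (fun θ => P y θ v)
      ((ContinuousLinearMap.apply ℝ ℝ v).comp (Q y)) θstar := fun y v => by
    exact
      ((ContinuousLinearMap.apply ℝ ℝ v).hasFDerivAt).comp θstar (hQ y)
  -- sums of derivatives vanish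
  have hPsum : ∀ θ, ∑ y : Y, P y θ = 0 := by
    intro θ
    have h1 : HasFDerivAt (fun θ' => ∑ y : Y, π θ' y) (∑ y : Y, P y θ) θ :=
      HasFDerivAt.fun_sum (fun y _ => hdP y θ)
    have h2 : HasFDerivAt (fun θ' => ∑ y : Y, π θ' y) (0 : (Fin d → ℝ) →L[ℝ] ℝ) θ := by
      have he : (fun θ' => ∑ y : Y, π θ' y) = fun _ => (1 : ℝ) := funext hsum
      rw [he]; exact hasFDerivAt_const (1 : ℝ) θ
    exact h1.unique h2
  have hQsum : ∑ y : Y, Q y = 0 := by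
    have h1 : HasFDerivAt (fun θ => ∑ y : Y, P y θ) (∑ y : Y, Q y) θstar :=
      HasFDerivAt.fun_sum (fun y _ => hQ y)
    have h2 : HasFDerivAt (fun θ => ∑ y : Y, P y θ)
        (0 : (Fin d → ℝ) →L[ℝ] ((Fin d → ℝ) →L[ℝ] ℝ)) θstar := by
      have he : (fun θ => ∑ y : Y, P y θ) = fun _ => (0 : (Fin d → ℝ) →L[ℝ] ℝ) :=
        funext hPsum
      rw [he]; exact hasFDerivAt_const 0 θstar
    exact h1.unique h2
  -- relation between Dr and P
  have hDrP : ∀ y, Dr y = β • ((π θstar y)⁻¹ • P y θstar) := by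
    intro y
    rw [hDr y]
    exact ((hlog θstar y).const_mul β).fderiv
  have hDrPa : ∀ (y : Y) (u : Fin d → ℝ), Dr y u = β * ((π θstar y)⁻¹ * P y θstar u) := by
    intro y u; rw [hDrP y]; simp
  have hmean : ∀ u : Fin d → ℝ, ∑ y : Y, π θstar y * Dr y u = 0 := by
    intro u
    have h1 : ∑ y : Y, π θstar y * Dr y u = ∑ y : Y, β * (P y θstar u) := by
      refine Finset.sum_congr rfl (fun y _ => ?_)
      rw [hDrPa y u]; field_simp
      exact mul_div_cancel_left₀ _ (hπne θstar y)
    rw [h1, ← Finset.mul_sum]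
    have h2 : ∑ y : Y, P y θstar u = (∑ y : Y, P y θstar) u := by
      simp [ContinuousLinearMap.sum_apply]
    rw [h2, hPsum]; simp
  -- the Hessian
  have hHess : ∀ u v : Fin d → ℝ, fderiv ℝ (fun θ' => (fderiv ℝ J θ') v) θstar u =
      ∑ y : Y, ((rstar y - β * (Real.log (π θstar y / πref y) + 1)) * (Q y u v)
        + (P y θstar v) * ((-(β * (π θstar y)⁻¹)) * (P y θstar u))) := by
    intro u v
    have hfun : (fun θ' => (fderiv ℝ J θ') v) =
        fun θ => ∑ y : Y, (rstar y - β * (Real.log (π θ y / πref y) + 1)) * (P y θ v) :=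
      funext (fun θ => hgrad θ v)
    rw [hfun]
    have hD : HasFDerivAt
        (fun θ => ∑ y : Y, (rstar y - β * (Real.log (π θ y / πref y) + 1)) * (P y θ v))
        (∑ y : Y, ((rstar y - β * (Real.log (π θstar y / πref y) + 1)) •
            ((ContinuousLinearMap.apply ℝ ℝ v).comp (Q y))
          + (P y θstar v) • ((-(β * (π θstar y)⁻¹)) • P y θstar))) θstar :=
      HasFDerivAt.fun_sum (fun y _ => (hc' y).mul (hQv y v))
    rw [hD.fderiv]
    simp only [ContinuousLinearMap.sum_apply, ContinuousLinearMap.add_apply,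
      ContinuousLinearMap.smul_apply, ContinuousLinearMap.coe_comp', Function.comp_apply,
      ContinuousLinearMap.apply_apply, smul_eq_mul]
  have key : ∀ u v : Fin d → ℝ, fderiv ℝ (fun θ' => (fderiv ℝ J θ') v) θstar u =
      -(1 / β) * ∑ y : Y, π θstar y * (Dr y u * Dr y v) := by
    intro u v
    rw [hHess u v, Finset.sum_add_distrib]
    have hk : ∀ y : Y, rstar y - β * (Real.log (π θstar y / πref y) + 1) = -β := by
      intro y; rw [mul_add, hstar y]; ring
    have h1 : ∑ y : Y, (rstar y - β * (Real.log (π θstar y / πref y) + 1)) * Q y u v = 0 := by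
      have h1a : ∑ y : Y, (rstar y - β * (Real.log (π θstar y / πref y) + 1)) * Q y u v
          = -β * ∑ y : Y, Q y u v := by
        rw [Finset.mul_sum]
        exact Finset.sum_congr rfl fun y _ => by rw [hk y]
      have h1b : ∑ y : Y, Q y u v = ((∑ y : Y, Q y) u) v := by
        simp [ContinuousLinearMap.sum_apply]
      rw [h1a, h1b, hQsum]; simp
    rw [h1, zero_add, Finset.mul_sum]
    refine Finset.sum_congr rfl fun y _ => ?_
    rw [hDrPa y u, hDrPa y v]
    field_simp [hπne θstar y]
  have part1 : ∀ u v : Fin d → ℝ,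
      fderiv ℝ (fun θ' => (fderiv ℝ J θ') v) θstar u =
        -(1 / β) *
          ((∑ y : Y, π θstar y * (Dr y u * Dr y v)) -
            (∑ y : Y, π θstar y * Dr y u) * (∑ y : Y, π θstar y * Dr y v)) := by
    intro u v
    rw [key u v, hmean u]
    ring
  refine ⟨part1, fun u => ?_⟩
  rw [key u u]
  have hnn : (0 : ℝ) ≤ ∑ y : Y, π θstar y * (Dr y u * Dr y u) :=
    Finset.sum_nonneg fun y _ => mul_nonneg (hpos θstar y).le (mul_self_nonneg _)
  have hb : (0 : ℝ) < 1 / β := by positivity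
  nlinarith
end
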